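/- arXiv:2002.04283 — 5 statements merged into one kernel-verified Lean document; each statement's English description precedes it below -/
import Mathlib

section
/- For real numbers x₁, x₂ ∈ [a₁, b₁] and y₁, y₂ ∈ [a₂, b₂] with a₁ ≤ b₁ and a₂ ≤ b₂, the inequality x₁y₁ - x₁y₂ + x₂y₁ + x₂y₂ - (a₂+b₂)x₂ - (a₁+b₁)y₁ + a₁b₂ + b₁a₂ ≤ 0 holds. -/
theorem generalized_CH_algebraic
    (a₁ b₁ a₂ b₂ x₁ x₂ y₁ y₂ : ℝ)
    (ha₁ : a₁ ≤ b₁) (ha₂ : a₂ ≤ b₂)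
    (hx₁ : x₁ ∈ Set.Icc a₁ b₁) (hx₂ : x₂ ∈ Set.Icc a₁ b₁)
    (hy₁ : y₁ ∈ Set.Icc a₂ b₂) (hy₂ : y₂ ∈ Set.Icc a₂ b₂) :
    x₁*y₁ - x₁*y₂ + x₂*y₁ + x₂*y₂ - (a₂+b₂)*x₂ - (a₁+b₁)*y₁ + a₁*b₂ + b₁*a₂ ≤ 0 := by
  obtain ⟨hx₁l, hx₁u⟩ := hx₁
  obtain ⟨hx₂l, hx₂u⟩ := hx₂
  obtain ⟨hy₁l, hy₁u⟩ := hy₁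
  obtain ⟨hy₂l, hy₂u⟩ := hy₂
  nlinarith [mul_nonneg (sub_nonneg.2 hx₁l) (sub_nonneg.2 hy₁l),
    mul_nonneg (sub_nonneg.2 hx₁l) (sub_nonneg.2 hy₂u),
    mul_nonneg (sub_nonneg.2 hx₁u) (sub_nonneg.2 hy₁l),
    mul_nonneg (sub_nonneg.2 hx₁u) (sub_nonneg.2 hy₂u),
    mul_nonneg (sub_nonneg.2 hx₂l) (sub_nonneg.2 hy₁u),
    mul_nonneg (sub_nonneg.2 hx₂l) (sub_nonneg.2 hy₂l),
    mul_nonneg (sub_nonneg.2 hx₂u) (sub_nonneg.2 hy₁u),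
    mul_nonneg (sub_nonneg.2 hx₂u) (sub_nonneg.2 hy₂l),
    mul_nonneg (sub_nonneg.2 hx₁l) (sub_nonneg.2 hy₁u),
    mul_nonneg (sub_nonneg.2 hx₂u) (sub_nonneg.2 hy₁l)]
end

section
/- Let (Γ, μ) be a probability measure space (the hidden variable space with distribution ρ(λ)dλ). Suppose p₁, p₁' : Γ → ℝ are measurable with values in [a₁, b₁] and p₂, p₂' : Γ → ℝ are measurable with values in [a₂, b₂], where 0 ≤ a₁ ≤ b₁ ≤ 1 and 0 ≤ a₂ ≤ b₂ ≤ 1. Define joint probabilities P(f,g) = ∫ f·g dμ and marginals P(f) = ∫ f dμ. Then P(p₁,p₂) - P(p₁,p₂') + P(p₁',p₂) + P(p₁',p₂') - (a₂+b₂)·P(p₁') - (a₁+b₁)·P(p₂) + a₁b₂ + b₁a₂ ≤ 0. -/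
open MeasureTheory

lemma pointwise_CH (a₁ b₁ a₂ b₂ x y u v : ℝ)
    (hx1 : a₁ ≤ x) (hx2 : x ≤ b₁) (hy1 : a₁ ≤ y) (hy2 : y ≤ b₁)
    (hu1 : a₂ ≤ u) (hu2 : u ≤ b₂) (hv1 : a₂ ≤ v) (hv2 : v ≤ b₂) :
    x*u - x*v + y*u + y*v - (a₂+b₂)*y - (a₁+b₁)*u + a₁*b₂ + b₁*a₂ ≤ 0 := by
  have hab1 : a₁ ≤ b₁ := le_trans hx1 hx2
  rcases le_total u v with h1 | h1 <;> rcases le_total (u+v) (a₂+b₂) with h2 | h2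
  · nlinarith [mul_nonneg (sub_nonneg.2 h1) (sub_nonneg.2 hx1),
      mul_nonneg (sub_nonneg.2 h2) (sub_nonneg.2 hy1),
      mul_nonneg (sub_nonneg.2 hab1) (sub_nonneg.2 hu1)]
  · nlinarith [mul_nonneg (sub_nonneg.2 h1) (sub_nonneg.2 hx1),
      mul_nonneg (sub_nonneg.2 h2) (sub_nonneg.2 hy2),
      mul_nonneg (sub_nonneg.2 hab1) (sub_nonneg.2 hv2)]
  · nlinarith [mul_nonneg (sub_nonneg.2 h1) (sub_nonneg.2 hx2),
      mul_nonneg (sub_nonneg.2 h2) (sub_nonneg.2 hy1),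
      mul_nonneg (sub_nonneg.2 hab1) (sub_nonneg.2 hv1)]
  · nlinarith [mul_nonneg (sub_nonneg.2 h1) (sub_nonneg.2 hx2),
      mul_nonneg (sub_nonneg.2 h2) (sub_nonneg.2 hy2),
      mul_nonneg (sub_nonneg.2 hab1) (sub_nonneg.2 hu2)]

theorem generalized_CH_hidden_variable
    {Γ : Type*} [MeasurableSpace Γ] (μ : Measure Γ) [IsProbabilityMeasure μ]
    (a₁ b₁ a₂ b₂ : ℝ) (ha₁ : 0 ≤ a₁) (hab₁ : a₁ ≤ b₁) (hb₁ : b₁ ≤ 1)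
    (ha₂ : 0 ≤ a₂) (hab₂ : a₂ ≤ b₂) (hb₂ : b₂ ≤ 1)
    (p₁ p₁' p₂ p₂' : Γ → ℝ)
    (hm₁ : Measurable p₁) (hm₁' : Measurable p₁')
    (hm₂ : Measurable p₂) (hm₂' : Measurable p₂')
    (hp₁ : ∀ ω, p₁ ω ∈ Set.Icc a₁ b₁) (hp₁' : ∀ ω, p₁' ω ∈ Set.Icc a₁ b₁)
    (hp₂ : ∀ ω, p₂ ω ∈ Set.Icc a₂ b₂) (hp₂' : ∀ ω, p₂' ω ∈ Set.Icc a₂ b₂) :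
    (∫ ω, p₁ ω * p₂ ω ∂μ) - (∫ ω, p₁ ω * p₂' ω ∂μ)
      + (∫ ω, p₁' ω * p₂ ω ∂μ) + (∫ ω, p₁' ω * p₂' ω ∂μ)
      - (a₂ + b₂) * (∫ ω, p₁' ω ∂μ) - (a₁ + b₁) * (∫ ω, p₂ ω ∂μ)
      + a₁*b₂ + b₁*a₂ ≤ 0 := by
  have bdd : ∀ (f : Γ → ℝ) (a b : ℝ), 0 ≤ a → b ≤ 1 → (∀ ω, f ω ∈ Set.Icc a b) →
      Measurable f → Integrable f μ := by
    intro f a b ha hb hf hmf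
    refine Integrable.mono' (integrable_const 1) hmf.aestronglyMeasurable ?_
    filter_upwards with ω
    have h := hf ω
    rw [Real.norm_eq_abs, abs_le]
    constructor <;> [linarith [h.1]; linarith [h.2]]
  have i₁ : Integrable p₁ μ := bdd p₁ a₁ b₁ ha₁ hb₁ hp₁ hm₁
  have i₁' : Integrable p₁' μ := bdd p₁' a₁ b₁ ha₁ hb₁ hp₁' hm₁'
  have i₂ : Integrable p₂ μ := bdd p₂ a₂ b₂ ha₂ hb₂ hp₂ hm₂
  have i₂' : Integrable p₂' μ := bdd p₂' a₂ b₂ ha₂ hb₂ hp₂' hm₂'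
  have prodI : ∀ (f g : Γ → ℝ), Measurable f → Measurable g →
      (∀ ω, f ω ∈ Set.Icc a₁ b₁) → (∀ ω, g ω ∈ Set.Icc a₂ b₂) →
      Integrable (fun ω => f ω * g ω) μ := by
    intro f g hmf hmg hf hg
    refine Integrable.mono' (integrable_const 1) (hmf.mul hmg).aestronglyMeasurable ?_
    filter_upwards with ω
    have h1 := hf ω; have h2 := hg ω
    rw [Real.norm_eq_abs, abs_of_nonneg (mul_nonneg (le_trans ha₁ h1.1) (le_trans ha₂ h2.1))]
    calc f ω * g ω ≤ 1 * 1 := by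
          apply mul_le_mul (le_trans h1.2 hb₁) (le_trans h2.2 hb₂) (le_trans ha₂ h2.1) zero_le_one
      _ = 1 := by ring
  have i11 := prodI p₁ p₂ hm₁ hm₂ hp₁ hp₂
  have i12 := prodI p₁ p₂' hm₁ hm₂' hp₁ hp₂'
  have i21 := prodI p₁' p₂ hm₁' hm₂ hp₁' hp₂
  have i22 := prodI p₁' p₂' hm₁' hm₂' hp₁' hp₂'
  have key : (∫ ω, (p₁ ω * p₂ ω - p₁ ω * p₂' ω + p₁' ω * p₂ ω + p₁' ω * p₂' ω
      - (a₂+b₂) * p₁' ω - (a₁+b₁) * p₂ ω + a₁*b₂ + b₁*a₂) ∂μ) ≤ 0 := by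
    apply integral_nonpos
    intro ω
    exact pointwise_CH a₁ b₁ a₂ b₂ (p₁ ω) (p₁' ω) (p₂ ω) (p₂' ω)
      (hp₁ ω).1 (hp₁ ω).2 (hp₁' ω).1 (hp₁' ω).2
      (hp₂ ω).1 (hp₂ ω).2 (hp₂' ω).1 (hp₂' ω).2
  have expand : (∫ ω, (p₁ ω * p₂ ω - p₁ ω * p₂' ω + p₁' ω * p₂ ω + p₁' ω * p₂' ω
      - (a₂+b₂) * p₁' ω - (a₁+b₁) * p₂ ω + a₁*b₂ + b₁*a₂) ∂μ)
      = (∫ ω, p₁ ω * p₂ ω ∂μ) - (∫ ω, p₁ ω * p₂' ω ∂μ)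
      + (∫ ω, p₁' ω * p₂ ω ∂μ) + (∫ ω, p₁' ω * p₂' ω ∂μ)
      - (a₂ + b₂) * (∫ ω, p₁' ω ∂μ) - (a₁ + b₁) * (∫ ω, p₂ ω ∂μ)
      + a₁*b₂ + b₁*a₂ := by
    rw [integral_add, integral_add, integral_sub, integral_sub, integral_add, integral_add,
      integral_sub, integral_const_mul, integral_const_mul, integral_const, integral_const]
    · simp [measure_univ]
    all_goals first
      | exact i11 | exact i12 | exact i21 | exact i22
      | exact i₁'.const_mul _ | exact i₂.const_mul _
      | exact (i11.sub i12) | exact ((i11.sub i12).add i21)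
      | exact (((i11.sub i12).add i21).add i22)
      | exact ((((i11.sub i12).add i21).add i22).sub (i₁'.const_mul _))
      | exact (((((i11.sub i12).add i21).add i22).sub (i₁'.const_mul _)).sub (i₂.const_mul _))
      | exact integrable_const _
      | exact ((((((i11.sub i12).add i21).add i22).sub (i₁'.const_mul _)).sub (i₂.const_mul _)).add (integrable_const _))
  linarith [expand ▸ key]
end

section
/- Let (Γ, μ) be a probability measure space, α ∈ [0,1], and let p₁, p₁', p₂, p₂' : Γ → ℝ be measurable functions with values in [(1-α)/2, (1+α)/2]. With P(f,g) = ∫ f·g dμ and P(f) = ∫ f dμ, one has P(p₁,p₂) - P(p₁,p₂') + P(p₁',p₂) + P(p₁',p₂') - P(p₁') - P(p₂) + (1-α²)/2 ≤ 0. -/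
open MeasureTheory

lemma CH_pointwise (α x1 x1' x2 x2' : ℝ)
    (h1 : (1-α)/2 ≤ x1) (h1b : x1 ≤ (1+α)/2) (h1' : (1-α)/2 ≤ x1') (h1b' : x1' ≤ (1+α)/2)
    (h2 : (1-α)/2 ≤ x2) (h2b : x2 ≤ (1+α)/2) (h2' : (1-α)/2 ≤ x2') (h2b' : x2' ≤ (1+α)/2) :
    x1*x2 - x1*x2' + x1'*x2 + x1'*x2' - x1' - x2 + (1-α^2)/2 ≤ 0 := by
  rcases le_total x2' x2 with h | h
  · nlinarith [mul_nonneg (sub_nonneg.2 h1b) (sub_nonneg.2 h), mul_nonneg (sub_nonneg.2 h1b') (sub_nonneg.2 h2b), mul_nonneg (sub_nonneg.2 h1') (sub_nonneg.2 h2'), mul_nonneg (sub_nonneg.2 h1b') (sub_nonneg.2 h2b'), mul_nonneg (sub_nonneg.2 h1') (sub_nonneg.2 h2), mul_nonneg (sub_nonneg.2 h1b) (sub_nonneg.2 h2), mul_nonneg (sub_nonneg.2 h1b') (sub_nonneg.2 h)]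
  · nlinarith [mul_nonneg (sub_nonneg.2 h1) (sub_nonneg.2 h), mul_nonneg (sub_nonneg.2 h1b') (sub_nonneg.2 h2b), mul_nonneg (sub_nonneg.2 h1') (sub_nonneg.2 h2'), mul_nonneg (sub_nonneg.2 h1b') (sub_nonneg.2 h2b'), mul_nonneg (sub_nonneg.2 h1') (sub_nonneg.2 h2), mul_nonneg (sub_nonneg.2 h1') (sub_nonneg.2 h), mul_nonneg (sub_nonneg.2 h1b) (sub_nonneg.2 h2b')]

theorem generalized_CH_hyperon
    {Γ : Type*} [MeasurableSpace Γ] (μ : Measure Γ) [IsProbabilityMeasure μ]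
    (α : ℝ) (hα : α ∈ Set.Icc (0:ℝ) 1)
    (p₁ p₁' p₂ p₂' : Γ → ℝ)
    (hm₁ : Measurable p₁) (hm₁' : Measurable p₁')
    (hm₂ : Measurable p₂) (hm₂' : Measurable p₂')
    (hp₁ : ∀ ω, p₁ ω ∈ Set.Icc ((1-α)/2) ((1+α)/2))
    (hp₁' : ∀ ω, p₁' ω ∈ Set.Icc ((1-α)/2) ((1+α)/2))
    (hp₂ : ∀ ω, p₂ ω ∈ Set.Icc ((1-α)/2) ((1+α)/2))
    (hp₂' : ∀ ω, p₂' ω ∈ Set.Icc ((1-α)/2) ((1+α)/2)) :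
    (∫ ω, p₁ ω * p₂ ω ∂μ) - (∫ ω, p₁ ω * p₂' ω ∂μ)
      + (∫ ω, p₁' ω * p₂ ω ∂μ) + (∫ ω, p₁' ω * p₂' ω ∂μ)
      - (∫ ω, p₁' ω ∂μ) - (∫ ω, p₂ ω ∂μ)
      + (1 - α^2)/2 ≤ 0 := by
  obtain ⟨hα0, hα1⟩ := hα
  have hbd : ∀ (f : Γ → ℝ), (∀ ω, f ω ∈ Set.Icc ((1-α)/2) ((1+α)/2)) →
      ∀ ω, ‖f ω‖ ≤ 1 := by
    intro f hf ω
    obtain ⟨h1, h2⟩ := hf ω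
    rw [Real.norm_eq_abs, abs_le]
    constructor <;> nlinarith
  have hint : ∀ (f : Γ → ℝ), Measurable f →
      (∀ ω, f ω ∈ Set.Icc ((1-α)/2) ((1+α)/2)) → Integrable f μ := by
    intro f hm hf
    exact (integrable_const (1:ℝ)).mono' hm.aestronglyMeasurable
      (Filter.Eventually.of_forall (hbd f hf))
  have hintm : ∀ (f g : Γ → ℝ), Measurable f → Measurable g →
      (∀ ω, f ω ∈ Set.Icc ((1-α)/2) ((1+α)/2)) →
      (∀ ω, g ω ∈ Set.Icc ((1-α)/2) ((1+α)/2)) →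
      Integrable (fun ω => f ω * g ω) μ := by
    intro f g hmf hmg hf hg
    refine (integrable_const (1:ℝ)).mono' (hmf.mul hmg).aestronglyMeasurable
      (Filter.Eventually.of_forall fun ω => ?_)
    rw [norm_mul]
    calc ‖f ω‖ * ‖g ω‖ ≤ 1 * 1 :=
          mul_le_mul (hbd f hf ω) (hbd g hg ω) (norm_nonneg _) zero_le_one
      _ = 1 := one_mul 1
  have i12 := hintm p₁ p₂ hm₁ hm₂ hp₁ hp₂
  have i12' := hintm p₁ p₂' hm₁ hm₂' hp₁ hp₂'
  have i1'2 := hintm p₁' p₂ hm₁' hm₂ hp₁' hp₂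
  have i1'2' := hintm p₁' p₂' hm₁' hm₂' hp₁' hp₂'
  have i1' := hint p₁' hm₁' hp₁'
  have i2 := hint p₂ hm₂ hp₂
  have key : ∫ ω, (p₁ ω * p₂ ω - p₁ ω * p₂' ω + p₁' ω * p₂ ω + p₁' ω * p₂' ω
      - p₁' ω - p₂ ω + (1 - α^2)/2) ∂μ ≤ 0 := by
    refine integral_nonpos fun ω => ?_
    exact CH_pointwise α (p₁ ω) (p₁' ω) (p₂ ω) (p₂' ω)
      (hp₁ ω).1 (hp₁ ω).2 (hp₁' ω).1 (hp₁' ω).2 (hp₂ ω).1 (hp₂ ω).2 (hp₂' ω).1 (hp₂' ω).2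
  have iA : Integrable (fun ω => p₁ ω * p₂ ω - p₁ ω * p₂' ω) μ := i12.sub i12'
  have iB : Integrable (fun ω => p₁ ω * p₂ ω - p₁ ω * p₂' ω + p₁' ω * p₂ ω) μ := iA.add i1'2
  have iC : Integrable (fun ω => p₁ ω * p₂ ω - p₁ ω * p₂' ω + p₁' ω * p₂ ω + p₁' ω * p₂' ω) μ := iB.add i1'2'
  have iD : Integrable (fun ω => p₁ ω * p₂ ω - p₁ ω * p₂' ω + p₁' ω * p₂ ω + p₁' ω * p₂' ω - p₁' ω) μ := iC.sub i1'
  have iE : Integrable (fun ω => p₁ ω * p₂ ω - p₁ ω * p₂' ω + p₁' ω * p₂ ω + p₁' ω * p₂' ω - p₁' ω - p₂ ω) μ := iD.sub i2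
  have e0 : ∫ ω, (p₁ ω * p₂ ω - p₁ ω * p₂' ω + p₁' ω * p₂ ω + p₁' ω * p₂' ω - p₁' ω - p₂ ω + (1 - α^2)/2) ∂μ
      = (∫ ω, (p₁ ω * p₂ ω - p₁ ω * p₂' ω + p₁' ω * p₂ ω + p₁' ω * p₂' ω - p₁' ω - p₂ ω) ∂μ) + ∫ _ω, (1 - α^2)/2 ∂μ :=
    integral_add iE (integrable_const _)
  have ec : (∫ _ω, (1 - α^2)/2 ∂μ) = (1 - α^2)/2 := by simp
  have e1 : ∫ ω, (p₁ ω * p₂ ω - p₁ ω * p₂' ω + p₁' ω * p₂ ω + p₁' ω * p₂' ω - p₁' ω - p₂ ω) ∂μ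
      = (∫ ω, (p₁ ω * p₂ ω - p₁ ω * p₂' ω + p₁' ω * p₂ ω + p₁' ω * p₂' ω - p₁' ω) ∂μ) - ∫ ω, p₂ ω ∂μ :=
    integral_sub iD i2
  have e2 : ∫ ω, (p₁ ω * p₂ ω - p₁ ω * p₂' ω + p₁' ω * p₂ ω + p₁' ω * p₂' ω - p₁' ω) ∂μ
      = (∫ ω, (p₁ ω * p₂ ω - p₁ ω * p₂' ω + p₁' ω * p₂ ω + p₁' ω * p₂' ω) ∂μ) - ∫ ω, p₁' ω ∂μ :=
    integral_sub iC i1'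
  have e3 : ∫ ω, (p₁ ω * p₂ ω - p₁ ω * p₂' ω + p₁' ω * p₂ ω + p₁' ω * p₂' ω) ∂μ
      = (∫ ω, (p₁ ω * p₂ ω - p₁ ω * p₂' ω + p₁' ω * p₂ ω) ∂μ) + ∫ ω, p₁' ω * p₂' ω ∂μ :=
    integral_add iB i1'2'
  have e4 : ∫ ω, (p₁ ω * p₂ ω - p₁ ω * p₂' ω + p₁' ω * p₂ ω) ∂μ
      = (∫ ω, (p₁ ω * p₂ ω - p₁ ω * p₂' ω) ∂μ) + ∫ ω, p₁' ω * p₂ ω ∂μ :=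
    integral_add iA i1'2
  have e5 : ∫ ω, (p₁ ω * p₂ ω - p₁ ω * p₂' ω) ∂μ
      = (∫ ω, p₁ ω * p₂ ω ∂μ) - ∫ ω, p₁ ω * p₂' ω ∂μ :=
    integral_sub i12 i12'
  linarith [key, e0, ec, e1, e2, e3, e4, e5]
end

section
/- For all real θ, (3·cos θ - cos(3θ))/4 ≤ √2/2, with equality when θ = π/4. -/
open Real

theorem CH_trig_bound :
    (∀ θ : ℝ, (3 * cos θ - cos (3*θ))/4 ≤ Real.sqrt 2 / 2) ∧
    (3 * cos (π/4) - cos (3*(π/4)))/4 = Real.sqrt 2 / 2 := by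
  have hs : Real.sqrt 2 ^ 2 = 2 := Real.sq_sqrt (by norm_num)
  have hsn : (0:ℝ) ≤ Real.sqrt 2 := Real.sqrt_nonneg 2
  constructor
  · intro θ
    rw [Real.cos_three_mul]
    have h1 : (0:ℝ) ≤ cos θ + Real.sqrt 2 := by nlinarith [neg_one_le_cos θ, sq_nonneg (Real.sqrt 2 - 1)]
    nlinarith [mul_nonneg (sq_nonneg (cos θ - Real.sqrt 2 / 2)) h1]
  · rw [show (3:ℝ)*(π/4) = π/4 + π/2 by ring, Real.cos_add_pi_div_two,
      Real.sin_pi_div_four, Real.cos_pi_div_four]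
    ring
end

section
/- For any α ∈ ℝ with 0 < α ≤ 1 and any β ∈ (2−√2, 1], there exist unit vectors n₁, n₁', n₂, n₂' in ℝ³ such that Q(n₁,n₂) − Q(n₁,n₂') + Q(n₁',n₂) + Q(n₁',n₂') − 1/2 − 1/2 + (1−α²)/2 > (1−β)·α²/2, where Q(u,v) = (1 + α²⟨u,v⟩)/4. -/
open RealInnerProductSpace

theorem quantum_violation_observable (α β : ℝ) (hα : 0 < α) (hα1 : α ≤ 1)
    (hβ : 2 - Real.sqrt 2 < β) (hβ1 : β ≤ 1) :
    ∃ n₁ n₁' n₂ n₂' : EuclideanSpace ℝ (Fin 3),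
      ‖n₁‖ = 1 ∧ ‖n₁'‖ = 1 ∧ ‖n₂‖ = 1 ∧ ‖n₂'‖ = 1 ∧
      (1 + α^2 * ⟪n₁, n₂⟫)/4 - (1 + α^2 * ⟪n₁, n₂'⟫)/4
        + (1 + α^2 * ⟪n₁', n₂⟫)/4 + (1 + α^2 * ⟪n₁', n₂'⟫)/4
        - 1/2 - 1/2 + (1 - α^2)/2 > (1 - β) * α^2 / 2 := by
  set c : ℝ := Real.sqrt 2 / 2 with hc
  have h2 : Real.sqrt 2 ^ 2 = 2 := Real.sq_sqrt (by norm_num)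
  have hcsq : c ^ 2 + c ^ 2 = 1 := by rw [hc]; nlinarith [h2]
  have hcpos : 0 < c := by
    rw [hc]; positivity
  refine ⟨(WithLp.equiv 2 _).symm ![c, c, 0], (WithLp.equiv 2 _).symm ![c, -c, 0],
    (WithLp.equiv 2 _).symm ![1, 0, 0], (WithLp.equiv 2 _).symm ![0, -1, 0], ?_, ?_, ?_, ?_, ?_⟩
  · rw [EuclideanSpace.norm_eq]
    simp [Fin.sum_univ_three, hcsq]
  · rw [EuclideanSpace.norm_eq]
    simp [Fin.sum_univ_three, hcsq]
  · rw [EuclideanSpace.norm_eq]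
    simp [Fin.sum_univ_three, hcsq]
  · rw [EuclideanSpace.norm_eq]
    simp [Fin.sum_univ_three, hcsq]
  · simp only [EuclideanSpace.inner_eq_star_dotProduct]
    simp [dotProduct, Fin.sum_univ_three]
    nlinarith [mul_pos (pow_pos hα 2) (show (0:ℝ) < Real.sqrt 2 - 2 + β by linarith), hc]
end
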